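/- Let A and B be lists over a type α with decidable equality, and let x : α be a symbol that occurs in neither A nor B. Then for every natural number m, lcsLen(List.replicate m x ++ A, List.replicate m x ++ B) = m + lcsLen(A, B). That is, prepending both strings with m copies of a fresh symbol x increases the longest common subsequence length by exactly m. -/

import Mathlib

/-- `lcsLen s t` is the maximum length of a list that is a sublist
(subsequence) of both `s` and `t`. -/
def lcsLen {α : Type*} [DecidableEq α] (s t : List α) : ℕ :=
  ((s.sublists.filter (fun l => decide (l.Sublist t))).map List.length).foldr max 0

private lemma le_foldr_max (L : List ℕ) {a : ℕ} (ha : a ∈ L) : a ≤ L.foldr max 0 := by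
  induction L with
  | nil => cases ha
  | cons b t ih =>
    rcases List.mem_cons.1 ha with rfl | h
    · exact le_max_left _ _
    · exact le_trans (ih h) (le_max_right _ _)

private lemma foldr_max_mem (L : List ℕ) (h : L ≠ []) : L.foldr max 0 ∈ L := by
  induction L with
  | nil => simp at h
  | cons b t ih =>
    cases t with
    | nil => simp
    | cons c u =>
      rcases max_cases b ((c :: u).foldr max 0) with ⟨he, _⟩ | ⟨he, _⟩ <;>
        simp only [List.foldr_cons] at *
      · simp [he]
      · rw [he]; exact List.mem_cons_of_mem _ (ih (by simp))

private lemma mem_lcs_list {α : Type*} [DecidableEq α] {s t : List α} {a : ℕ} :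
    a ∈ ((s.sublists.filter (fun l => decide (l.Sublist t))).map List.length) ↔
      ∃ l : List α, l.Sublist s ∧ l.Sublist t ∧ l.length = a := by
  simp [List.mem_filter, List.mem_sublists, and_assoc]

lemma length_le_lcsLen {α : Type*} [DecidableEq α] {s t l : List α}
    (hs : l.Sublist s) (ht : l.Sublist t) : l.length ≤ lcsLen s t :=
  le_foldr_max _ (mem_lcs_list.2 ⟨l, hs, ht, rfl⟩)

lemma lcsLen_exists {α : Type*} [DecidableEq α] (s t : List α) :
    ∃ l : List α, l.Sublist s ∧ l.Sublist t ∧ l.length = lcsLen s t := by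
  apply mem_lcs_list.1
  apply foldr_max_mem
  intro h
  have : (0 : ℕ) ∈ ((s.sublists.filter (fun l => decide (l.Sublist t))).map List.length) :=
    mem_lcs_list.2 ⟨[], List.nil_sublist _, List.nil_sublist _, rfl⟩
  rw [h] at this; exact absurd this List.not_mem_nil

/-- Prepending both strings with `m` copies of a fresh symbol `x` increases
the LCS length by exactly `m`. -/
theorem lcsLen_replicate_prepend {α : Type*} [DecidableEq α]
    (A B : List α) (x : α) (hxA : x ∉ A) (hxB : x ∉ B) (m : ℕ) :
    lcsLen (List.replicate m x ++ A) (List.replicate m x ++ B) =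
      m + lcsLen A B := by
  apply le_antisymm
  · -- upper bound
    obtain ⟨l, hsA, hsB, hlen⟩ := lcsLen_exists (List.replicate m x ++ A) (List.replicate m x ++ B)
    rw [← hlen]
    obtain ⟨l₁, l₂, rfl, hr₁, hA⟩ := List.sublist_append_iff.1 hsA
    obtain ⟨l₁', l₂', heq, hr₁', hB⟩ := List.sublist_append_iff.1 hsB
    obtain ⟨k, hk, rfl⟩ := List.sublist_replicate_iff.1 hr₁
    obtain ⟨k', hk', rfl⟩ := List.sublist_replicate_iff.1 hr₁'
    have hxl₂ : x ∉ l₂ := fun h => hxA (hA.subset h)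
    have hxl₂' : x ∉ l₂' := fun h => hxB (hB.subset h)
    -- show k = k'
    have hkk : k = k' := by
      by_contra hne
      rcases Nat.lt_or_ge k k' with h | h
      · -- x at position k in RHS, but in l₂ on LHS
        have : (List.replicate k x ++ l₂)[k]? = (List.replicate k' x ++ l₂')[k]? := by
          rw [heq]
        rw [List.getElem?_append_right (by simp), List.getElem?_append_left (by simpa)] at this
        simp only [List.length_replicate, Nat.sub_self, 
          List.getElem?_replicate, h, if_true] at this
        obtain ⟨hlt, hval⟩ := List.getElem?_eq_some_iff.1 this
        exact hxl₂ (hval ▸ List.getElem_mem hlt)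
      · have h2 : k' < k ∨ k' = k := by omega
        rcases h2 with h | h
        · have : (List.replicate k x ++ l₂)[k']? = (List.replicate k' x ++ l₂')[k']? := by
            rw [heq]
          rw [List.getElem?_append_left (by simpa), List.getElem?_append_right (by simp)] at this
          simp only [List.length_replicate, Nat.sub_self, 
            List.getElem?_replicate, h, if_true] at this
          obtain ⟨hlt, hval⟩ := List.getElem?_eq_some_iff.1 this.symm
          exact hxl₂' (hval ▸ List.getElem_mem hlt)
        · exact hne h.symm
    subst hkk
    have hl₂ : l₂ = l₂' := by
      have := heq
      rwa [List.append_cancel_left_eq] at this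
    subst hl₂
    have := length_le_lcsLen hA hB
    simp only [List.length_append, List.length_replicate]
    omega
  · -- lower bound
    obtain ⟨l, hA, hB, hlen⟩ := lcsLen_exists A B
    have h1 : (List.replicate m x ++ l).Sublist (List.replicate m x ++ A) :=
      List.Sublist.append (List.Sublist.refl _) hA
    have h2 : (List.replicate m x ++ l).Sublist (List.replicate m x ++ B) :=
      List.Sublist.append (List.Sublist.refl _) hB
    have := length_le_lcsLen h1 h2
    simpa [hlen] using this
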